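/- Let t be a target distribution with countably infinite support. For each positive integer M, let p^(M) be any M-type distribution minimizing D(p‖t) over all M-type distributions, and let k(M) be its support size. Then k(M) → ∞ and k(M)/M → 0 as M → ∞. -/

import Mathlib

/-- A target distribution: a probability distribution on the positive integers
(indexed here by ℕ) with nonincreasing entries. -/
def IsTargetDist (t : ℕ → ℝ) : Prop :=
  (∀ i, 0 ≤ t i) ∧ (∀ i, t (i + 1) ≤ t i) ∧ HasSum t 1

/-- An `M`-type distribution: every entry is `c_i / M` for a nonnegative integer
`c_i ≤ M`, and the entries sum to one. -/
def IsMType (M : ℕ) (p : ℕ → ℝ) : Prop :=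
  HasSum p 1 ∧ ∃ c : ℕ → ℕ, (∀ i, c i ≤ M) ∧ ∀ i, p i = (c i : ℝ) / M

open Classical in
/-- Informational divergence `D(p‖t) = Σ_{i : p_i > 0} p_i log(p_i / t_i)`
(natural log), valued in the extended reals: it is `⊤` if `p` puts mass where
`t` does not. -/
noncomputable def klE (p t : ℕ → ℝ) : EReal :=
  if ∀ i, 0 < p i → 0 < t i then
    (((∑' i, if 0 < p i then p i * Real.log (p i / t i) else 0 : ℝ) : EReal))
  else ⊤

open Real Filter Finset

private noncomputable def gfun (n : ℕ) : ℝ :=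
  ((n : ℝ) + 1) * Real.log ((n : ℝ) + 1) - (n : ℝ) * Real.log n

private lemma gfun_lb (n : ℕ) : Real.log ((n : ℝ) + 1) ≤ gfun n := by
  have h : (n : ℝ) * Real.log n ≤ (n : ℝ) * Real.log ((n:ℝ)+1) := by
    rcases Nat.eq_zero_or_pos n with h | h
    · simp [h]
    · have h0 : (0:ℝ) < n := by exact_mod_cast h
      exact mul_le_mul_of_nonneg_left (Real.log_le_log h0 (by linarith)) (by positivity)
  unfold gfun; nlinarith [h]

private lemma gfun_ub (n : ℕ) : gfun n ≤ Real.log ((n : ℝ) + 1) + 1 := by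
  rcases Nat.eq_zero_or_pos n with h | h
  · simp [gfun, h]
  · have h0 : (0:ℝ) < n := by exact_mod_cast h
    have h1 : Real.log ((n:ℝ)+1) - Real.log n = Real.log (((n:ℝ)+1)/n) := by
      rw [Real.log_div (by linarith) (ne_of_gt h0)]
    have h2 : Real.log (((n:ℝ)+1)/n) ≤ ((n:ℝ)+1)/n - 1 :=
      Real.log_le_sub_one_of_pos (by positivity)
    have h3 : ((n:ℝ)+1)/n - 1 = 1/n := by field_simp; ring
    have h4 : Real.log ((n:ℝ)+1) - Real.log n ≤ 1/n := by rw [h1]; linarith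
    have h5 : (n:ℝ) * (Real.log ((n:ℝ)+1) - Real.log n) ≤ 1 := by
      calc (n:ℝ) * (Real.log ((n:ℝ)+1) - Real.log n) ≤ (n:ℝ) * (1/n) :=
            mul_le_mul_of_nonneg_left h4 (by positivity)
        _ = 1 := by field_simp
    unfold gfun; nlinarith

private lemma kl_lb (t : ℕ → ℝ) (hpos : ∀ i, 0 < t i) (p : ℕ → ℝ) (hnn : ∀ i, 0 ≤ p i)
    (S : Finset ℕ) (hsum : ∑ i ∈ S, p i = 1) :
    - Real.log (∑ i ∈ S.filter (fun i => 0 < p i), t i) ≤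
      ∑ i ∈ S, p i * Real.log (p i / t i) := by
  set S' := S.filter (fun i => 0 < p i) with hS'
  have hsum' : ∑ i ∈ S', p i = 1 := by
    rw [hS', Finset.sum_filter_of_ne (fun i hi h => lt_of_le_of_ne (hnn i) (Ne.symm h)), hsum]
  have hmem : ∀ i ∈ S', t i / p i ∈ Set.Ioi (0:ℝ) := by
    intro i hi
    have hp := (Finset.mem_filter.1 hi).2
    exact Set.mem_Ioi.2 (div_pos (hpos i) hp)
  have hjen := strictConcaveOn_log_Ioi.concaveOn.le_map_sum
    (f := Real.log) (w := p) (p := fun i => t i / p i) (t := S')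
    (fun i hi => hnn i) hsum' hmem
  have hpt : ∀ i ∈ S', p i • (t i / p i) = t i := by
    intro i hi
    have hp := (Finset.mem_filter.1 hi).2
    rw [smul_eq_mul]; field_simp
  rw [Finset.sum_congr rfl hpt] at hjen
  have hlhs : ∑ i ∈ S', p i • Real.log (t i / p i) =
      - ∑ i ∈ S', p i * Real.log (p i / t i) := by
    rw [← Finset.sum_neg_distrib]
    refine Finset.sum_congr rfl (fun i hi => ?_)
    have hp := (Finset.mem_filter.1 hi).2
    have hlog : Real.log (t i / p i) = - Real.log (p i / t i) := by
      rw [← Real.log_inv]; congr 1; rw [inv_div]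
    rw [smul_eq_mul, hlog]; ring
  rw [hlhs] at hjen
  have hsame : ∑ i ∈ S', p i * Real.log (p i / t i) = ∑ i ∈ S, p i * Real.log (p i / t i) := by
    rw [hS']
    exact Finset.sum_filter_of_ne (fun i hi h => by
      rcases lt_or_eq_of_le (hnn i) with hlt | heq
      · exact hlt
      · exact absurd (by rw [← heq]; ring) h)
  linarith [hjen, hsame.symm.le, hsame.le]

private lemma sum_anti_le (t : ℕ → ℝ) (hnn : ∀ i, 0 ≤ t i) (hanti : Antitone t)
    (S : Finset ℕ) : ∑ i ∈ S, t i ≤ ∑ i ∈ Finset.range S.card, t i := by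
  induction S using Finset.strongInduction with
  | _ S ih =>
    rcases S.eq_empty_or_nonempty with h | h
    · simp [h]
    · have hm := S.max'_mem h
      set m := S.max' h with hmdef
      obtain ⟨n, hn⟩ : ∃ n, S.card = n + 1 := ⟨S.card - 1, by
        have := Finset.card_pos.2 h; omega⟩
      have hcard : S.card ≤ m + 1 := by
        have : S ⊆ Finset.range (m+1) := by
          intro x hx
          exact Finset.mem_range.2 (Nat.lt_succ_of_le (S.le_max' x hx))
        simpa using Finset.card_le_card this
      have hle : n ≤ m := by omega
      have herase := ih (S.erase m) (Finset.erase_ssubset hm)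
      have hcarde : (S.erase m).card = n := by
        rw [Finset.card_erase_of_mem hm, hn]; omega

      have hsplit : ∑ i ∈ S, t i = ∑ i ∈ S.erase m, t i + t m :=
        (Finset.sum_erase_add S t hm).symm
      rw [hn, Finset.range_add_one, Finset.sum_insert (by simp), hsplit]
      rw [hcarde] at herase
      have : t m ≤ t n := hanti hle
      linarith

private lemma klE_eq_sum (t : ℕ → ℝ) (hpos : ∀ i, 0 < t i) (p : ℕ → ℝ)
    (hnn : ∀ i, 0 ≤ p i) (S : Finset ℕ) (hS : ∀ i ∉ S, p i = 0) :
    klE p t = ((∑ i ∈ S, p i * Real.log (p i / t i) : ℝ) : EReal) := by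
  classical
  unfold klE
  rw [if_pos (fun i _ => hpos i)]
  congr 1
  rw [tsum_eq_sum (s := S) (fun i hi => by simp [hS i hi])]
  refine Finset.sum_congr rfl (fun i hi => ?_)
  by_cases h : 0 < p i
  · simp [h]
  · have h0 : p i = 0 := le_antisymm (not_lt.1 h) (hnn i)
    simp [h, h0]

private lemma mtype_struct {M : ℕ} (hM : 0 < M) {p : ℕ → ℝ} (h : IsMType M p) :
    ∃ c : ℕ → ℕ, (∀ i, c i ≤ M) ∧ (∀ i, p i = (c i : ℝ) / M) ∧
      ∃ N : ℕ, 0 < N ∧ (∀ i, N ≤ i → c i = 0) ∧ ∑ i ∈ Finset.range N, c i = M := by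
  obtain ⟨hsum, c, hle, hc⟩ := h
  refine ⟨c, hle, hc, ?_⟩
  have hM' : (0:ℝ) < M := by exact_mod_cast hM
  have htend : Tendsto p atTop (nhds 0) := hsum.summable.tendsto_atTop_zero
  have hev : ∀ᶠ i in atTop, p i < 1 / M := htend.eventually (gt_mem_nhds (by positivity))
  obtain ⟨N0, hN0⟩ := hev.exists_forall_of_atTop
  refine ⟨N0 + 1, Nat.succ_pos _, fun i hi => ?_, ?_⟩
  · have := hN0 i (by omega)
    rw [hc i] at this
    have : (c i : ℝ) < 1 := by
      rw [div_lt_div_iff₀ hM' hM'] at this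
      nlinarith
    exact_mod_cast Nat.lt_one_iff.1 (by exact_mod_cast this)
  · have hz : ∀ i ∉ Finset.range (N0+1), p i = 0 := by
      intro i hi
      have hi' : N0 + 1 ≤ i := by simpa using hi
      have := hN0 i (by omega)
      rw [hc i] at this ⊢
      have hci : (c i : ℝ) < 1 := by
        rw [div_lt_div_iff₀ hM' hM'] at this
        nlinarith
      have : c i = 0 := by exact_mod_cast Nat.lt_one_iff.1 (by exact_mod_cast hci)
      simp [this]
    have h1 : ∑ i ∈ Finset.range (N0+1), p i = 1 := by
      rw [← hsum.tsum_eq]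
      exact (tsum_eq_sum hz).symm
    have h2 : ∑ i ∈ Finset.range (N0+1), (c i : ℝ) = M := by
      have : ∑ i ∈ Finset.range (N0+1), p i = (∑ i ∈ Finset.range (N0+1), (c i:ℝ)) / M := by
        rw [Finset.sum_div]
        exact Finset.sum_congr rfl (fun i _ => hc i)
      rw [this] at h1
      field_simp at h1
      linarith
    exact_mod_cast h2

private lemma mtype_of_c {M : ℕ} (hM : 0 < M) (c : ℕ → ℕ) (N : ℕ)
    (hle : ∀ i, c i ≤ M) (hz : ∀ i, N ≤ i → c i = 0)
    (hsum : ∑ i ∈ Finset.range N, c i = M) :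
    IsMType M (fun i => (c i : ℝ) / M) := by
  have hM' : (0:ℝ) < M := by exact_mod_cast hM
  constructor
  · have h0 : ∀ i ∉ Finset.range N, (c i : ℝ)/M = 0 := by
      intro i hi; simp [hz i (by simpa using hi)]
    have hh : HasSum (fun i => (c i : ℝ)/M) (∑ i ∈ Finset.range N, (c i : ℝ)/M) :=
      hasSum_sum_of_ne_finset_zero h0
    have heq : ∑ i ∈ Finset.range N, (c i : ℝ)/M = 1 := by
      rw [← Finset.sum_div]
      rw [show ∑ i ∈ Finset.range N, (c i:ℝ) = (M:ℝ) by exact_mod_cast congrArg Nat.cast hsum]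
      field_simp
    rwa [heq] at hh
  · exact ⟨c, hle, fun i => rfl⟩

private lemma achievable (t : ℕ → ℝ) (ht : IsTargetDist t) (hpos : ∀ i, 0 < t i)
    {ε : ℝ} (hε : 0 < ε) :
    ∀ᶠ M : ℕ in atTop, ∃ q : ℕ → ℝ, IsMType M q ∧ (∀ i, 0 ≤ q i) ∧
      (∀ i ∉ Finset.range M, q i = 0) ∧
      ∑ i ∈ Finset.range M, q i * Real.log (q i / t i) ≤ ε := by
  classical
  obtain ⟨hnn, hanti, hhs⟩ := ht
  have ht0 : 0 < t 0 := hpos 0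
  have htub : ∀ i, t i ≤ 1 := fun i => le_hasSum hhs i (fun j _ => hnn j)
  have htd : Tendsto (fun n => ∑ i ∈ Finset.range n, t i) atTop (nhds 1) :=
    hhs.tendsto_sum_nat
  have hev : ∀ᶠ n in atTop, 1 - ∑ i ∈ Finset.range n, t i < ε * t 0 / 2 := by
    have h := htd.eventually_const_lt (show (1:ℝ) - ε * t 0 / 2 < 1 by nlinarith)
    filter_upwards [h] with n hn; linarith
  obtain ⟨n, hn1, hntail⟩ : ∃ n, 1 ≤ n ∧ 1 - ∑ i ∈ Finset.range n, t i < ε * t 0 / 2 := by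
    obtain ⟨n, hn⟩ := (hev.and (eventually_ge_atTop 1)).exists
    exact ⟨n, hn.2, hn.1⟩
  set T : ℝ := ∑ i ∈ Finset.range n, t i with hT
  have hTle : T ≤ 1 := sum_le_hasSum _ (fun i _ => hnn i) hhs
  have hsplitT : T = t 0 + ∑ j ∈ Finset.Ico 1 n, t j := by
    rw [hT, Finset.range_eq_Ico, Finset.sum_eq_sum_Ico_succ_bot hn1]
  have hev2 : ∀ᶠ M : ℕ in atTop, (n:ℝ)/(M:ℝ) < ε * t 0 / 2 :=
    (tendsto_const_div_atTop_nhds_zero_nat (n:ℝ)).eventually_lt_const (by positivity)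
  filter_upwards [hev2, eventually_ge_atTop 1, eventually_ge_atTop n] with M hMn hM1 hMgen
  have hMpos : 0 < M := hM1
  have hM' : (0:ℝ) < M := by exact_mod_cast hMpos
  set A : ℕ := ∑ j ∈ Finset.Ico 1 n, ⌊(M:ℝ) * t j⌋₊ with hA
  have hAcast : (A:ℝ) = ∑ j ∈ Finset.Ico 1 n, (⌊(M:ℝ) * t j⌋₊ : ℝ) := by
    rw [hA]; push_cast; rfl
  have hAub : (A:ℝ) ≤ (M:ℝ) * (T - t 0) := by
    rw [hAcast]
    calc ∑ j ∈ Finset.Ico 1 n, (⌊(M:ℝ) * t j⌋₊ : ℝ)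
        ≤ ∑ j ∈ Finset.Ico 1 n, (M:ℝ) * t j :=
          Finset.sum_le_sum (fun j _ => Nat.floor_le (mul_nonneg hM'.le (hnn j)))
      _ = (M:ℝ) * ∑ j ∈ Finset.Ico 1 n, t j := by rw [Finset.mul_sum]
      _ = (M:ℝ) * (T - t 0) := by rw [hsplitT]; ring
  have hAlb : (M:ℝ) * (T - t 0) - ((n:ℝ) - 1) ≤ (A:ℝ) := by
    rw [hAcast]
    have h1 : ∑ j ∈ Finset.Ico 1 n, ((M:ℝ) * t j - 1) ≤
        ∑ j ∈ Finset.Ico 1 n, (⌊(M:ℝ) * t j⌋₊ : ℝ) :=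
      Finset.sum_le_sum (fun j _ => (Nat.sub_one_lt_floor _).le)
    have h2 : ∑ j ∈ Finset.Ico 1 n, ((M:ℝ) * t j - 1) =
        (M:ℝ) * (T - t 0) - ((n:ℝ) - 1) := by
      rw [Finset.sum_sub_distrib, Finset.sum_const, Nat.card_Ico, nsmul_eq_mul, mul_one,
        ← Finset.mul_sum, Nat.cast_sub hn1]
      have hico : ∑ j ∈ Finset.Ico 1 n, t j = T - t 0 := by rw [hsplitT]; ring
      rw [hico]; push_cast; ring
    linarith
  have hAleM : A ≤ M := by
    have : (A:ℝ) ≤ (M:ℝ) := le_trans hAub (by nlinarith)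
    exact_mod_cast this
  set c : ℕ → ℕ := fun i => if i = 0 then M - A else if i < n then ⌊(M:ℝ) * t i⌋₊ else 0
    with hc
  have hcle : ∀ i, c i ≤ M := by
    intro i
    rw [hc]
    by_cases h0 : i = 0
    · simp [h0]
    · by_cases h1 : i < n
      · simp only [h0, if_false, h1, if_true]
        calc ⌊(M:ℝ) * t i⌋₊ ≤ ⌊(M:ℝ)⌋₊ :=
              Nat.floor_le_floor (by nlinarith [htub i, hpos i])
          _ = M := Nat.floor_natCast M
      · simp [h0, h1]
  have hcz : ∀ i, n ≤ i → c i = 0 := by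
    intro i hi
    rw [hc]
    have h0 : i ≠ 0 := by omega
    have h1 : ¬ i < n := by omega
    simp [h0, h1]
  have hcsum : ∑ i ∈ Finset.range n, c i = M := by
    rw [Finset.range_eq_Ico, Finset.sum_eq_sum_Ico_succ_bot hn1]
    have h0 : c 0 = M - A := by rw [hc]; simp
    have h1 : ∑ i ∈ Finset.Ico (0+1) n, c i = A := by
      rw [hA]
      refine Finset.sum_congr rfl (fun i hi => ?_)
      obtain ⟨hi1, hi2⟩ := Finset.mem_Ico.1 hi
      rw [hc]
      have : i ≠ 0 := by omega
      simp [this, hi2]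
    rw [h0, h1]
    omega
  set q : ℕ → ℝ := fun i => (c i : ℝ) / M with hq
  have hqnn : ∀ i, 0 ≤ q i := fun i => by rw [hq]; positivity
  have hqz : ∀ i ∉ Finset.range M, q i = 0 := by
    intro i hi
    have : n ≤ i := le_trans hMgen (by simpa using hi)
    rw [hq]; simp [hcz i this]
  refine ⟨q, mtype_of_c hMpos c n hcle hcz hcsum, hqnn, hqz, ?_⟩
  have hsum_eq : ∑ i ∈ Finset.range M, q i * Real.log (q i / t i) =
      ∑ i ∈ Finset.range n, q i * Real.log (q i / t i) := by
    refine (Finset.sum_subset (Finset.range_subset_range.2 hMgen) (fun i _ hi => ?_)).symm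
    have : n ≤ i := by simpa using hi
    rw [hq]; simp [hcz i this]
  rw [hsum_eq, Finset.range_eq_Ico, Finset.sum_eq_sum_Ico_succ_bot hn1]
  -- tail terms are nonpositive
  have htail : ∑ i ∈ Finset.Ico (0+1) n, q i * Real.log (q i / t i) ≤ 0 := by
    refine Finset.sum_nonpos (fun i hi => ?_)
    obtain ⟨hi1, hi2⟩ := Finset.mem_Ico.1 hi
    have hqi : q i ≤ t i := by
      rw [hq, hc]
      have h0 : i ≠ 0 := by omega
      simp only [h0, if_false, hi2, if_true]
      rw [div_le_iff₀ hM']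
      calc (⌊(M:ℝ) * t i⌋₊ : ℝ) ≤ (M:ℝ) * t i := Nat.floor_le (mul_nonneg hM'.le (hnn i))
        _ = t i * M := by ring
    refine mul_nonpos_of_nonneg_of_nonpos (hqnn i) ?_
    refine Real.log_nonpos (div_nonneg (hqnn i) (hpos i).le) ?_
    rw [div_le_one (hpos i)]
    exact hqi
  -- head term
  have hq0 : q 0 = ((M:ℝ) - A) / M := by
    rw [hq, hc]
    simp only [if_true, eq_self_iff_true]
    rw [Nat.cast_sub hAleM]
  have hq0ge : t 0 ≤ q 0 := by
    rw [hq0, le_div_iff₀ hM']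
    nlinarith
  have hq0le1 : q 0 ≤ 1 := by
    rw [hq0, div_le_one hM']
    have : (0:ℝ) ≤ (A:ℝ) := by positivity
    linarith
  have hq0ub : q 0 - t 0 ≤ ε * t 0 := by
    rw [hq0]
    rw [div_sub' (ne_of_gt hM'), div_le_iff₀ hM']
    have h1 : (n:ℝ) - 1 ≤ (n:ℝ) := by linarith
    have h2 : (n:ℝ) < ε * t 0 / 2 * M := by
      rw [div_lt_iff₀ hM'] at hMn
      linarith
    nlinarith
  have hterm0 : q 0 * Real.log (q 0 / t 0) ≤ ε := by
    have hq0pos : 0 < q 0 := lt_of_lt_of_le ht0 hq0ge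
    have hlog : Real.log (q 0 / t 0) ≤ q 0 / t 0 - 1 :=
      Real.log_le_sub_one_of_pos (by positivity)
    have heq : q 0 / t 0 - 1 = (q 0 - t 0) / t 0 := by field_simp
    have h1 : q 0 * Real.log (q 0 / t 0) ≤ q 0 * ((q 0 - t 0) / t 0) := by
      rw [← heq]
      exact mul_le_mul_of_nonneg_left hlog (le_of_lt hq0pos)
    have h2 : q 0 * ((q 0 - t 0) / t 0) ≤ 1 * ((q 0 - t 0) / t 0) := by
      refine mul_le_mul_of_nonneg_right hq0le1 ?_
      have : 0 ≤ q 0 - t 0 := by linarith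
      positivity
    have h3 : (q 0 - t 0) / t 0 ≤ ε := by
      rw [div_le_iff₀ ht0]
      linarith [hq0ub]
    linarith
  linarith

private lemma term_expand {M : ℕ} (hM : 0 < M) {s : ℝ} (hs : 0 < s) (x : ℕ) :
    ((x:ℝ)/M) * Real.log (((x:ℝ)/M)/s) =
      ((x:ℝ) * Real.log x - (x:ℝ) * Real.log M - (x:ℝ) * Real.log s)/M := by
  have hM' : (0:ℝ) < M := by exact_mod_cast hM
  rcases Nat.eq_zero_or_pos x with h | h
  · simp [h]
  · have hx : (0:ℝ) < x := by exact_mod_cast h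
    rw [Real.log_div (by positivity) (ne_of_gt hs), Real.log_div (ne_of_gt hx) (ne_of_gt hM')]
    field_simp

private lemma support_weight (t : ℕ → ℝ) (hpos : ∀ i, 0 < t i) {M : ℕ} (hM : 0 < M)
    {pM : ℕ → ℝ} (hopt : ∀ q, IsMType M q → klE pM t ≤ klE q t)
    (c : ℕ → ℕ) (hle : ∀ i, c i ≤ M) (hpc : ∀ i, pM i = (c i:ℝ)/M)
    (N : ℕ) (hN : 0 < N) (hz : ∀ i, N ≤ i → c i = 0)
    (hcs : ∑ i ∈ Finset.range N, c i = M)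
    {i : ℕ} (hi : 0 < c i) : t 0 / (Real.exp 1 * M) ≤ t i := by
  classical
  have hM' : (0:ℝ) < M := by exact_mod_cast hM
  have he1 : (1:ℝ) ≤ Real.exp 1 := by
    have := Real.add_one_le_exp (1:ℝ); linarith
  have heM : (1:ℝ) ≤ Real.exp 1 * M := by
    have : (1:ℝ) ≤ (M:ℝ) := by exact_mod_cast hM
    nlinarith
  by_cases hi0 : i = 0
  · subst hi0
    exact div_le_self (hpos 0).le heM
  · -- i ≠ 0
    set S := Finset.range N with hS
    have h0S : 0 ∈ S := Finset.mem_range.2 hN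
    have hiS : i ∈ S := by
      by_contra h
      exact absurd (hz i (by simpa [hS] using h)) (by omega)
    have hiS' : i ∈ S.erase 0 := Finset.mem_erase.2 ⟨hi0, hiS⟩
    have hdecompR : ∀ f : ℕ → ℝ, ∑ j ∈ S, f j = f 0 + f i + ∑ j ∈ (S.erase 0).erase i, f j := by
      intro f
      rw [← Finset.add_sum_erase S f h0S, ← Finset.add_sum_erase _ f hiS']
      ring
    have hdecompN : ∀ f : ℕ → ℕ, ∑ j ∈ S, f j = f 0 + f i + ∑ j ∈ (S.erase 0).erase i, f j := by
      intro f
      rw [← Finset.add_sum_erase S f h0S, ← Finset.add_sum_erase _ f hiS']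
      ring
    by_cases hc0 : c 0 = M
    · -- then everything else is zero, contradiction with c i > 0
      exfalso
      have := hdecompN c
      rw [hcs, hc0] at this
      omega
    · have hc0M : c 0 + 1 ≤ M := by have := hle 0; omega
      set a := c 0 with ha
      set b := c i with hb
      set c' : ℕ → ℕ := fun j => if j = 0 then a + 1 else if j = i then b - 1 else c j with hc'
      have hc'le : ∀ j, c' j ≤ M := by
        intro j
        rw [hc']
        dsimp only
        split_ifs with h0 h1
        · omega
        · have := hle i; omega
        · exact hle j
      have hc'z : ∀ j, N ≤ j → c' j = 0 := by
        intro j hj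
        have hj0 : j ≠ 0 := by omega
        have hji : j ≠ i := by
          intro h; rw [h] at hj; exact absurd (hz i hj) (by omega)
        rw [hc']; simp [hj0, hji, hz j hj]
      have hc'sum : ∑ j ∈ S, c' j = M := by
        rw [hdecompN c']
        have h1 : c' 0 = a + 1 := by rw [hc']; simp
        have h2 : c' i = b - 1 := by rw [hc']; simp [hi0]
        have h3 : ∑ j ∈ (S.erase 0).erase i, c' j = ∑ j ∈ (S.erase 0).erase i, c j := by
          refine Finset.sum_congr rfl (fun j hj => ?_)
          obtain ⟨hji, hj'⟩ := Finset.mem_erase.1 hj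
          obtain ⟨hj0, _⟩ := Finset.mem_erase.1 hj'
          rw [hc']; simp [hj0, hji]
        rw [h1, h2, h3]
        have hd2 := hdecompN c
        rw [hcs] at hd2
        omega
      set q : ℕ → ℝ := fun j => (c' j : ℝ)/M with hq
      have hqM : IsMType M q := mtype_of_c hM c' N hc'le hc'z hc'sum
      have hqnn : ∀ j, 0 ≤ q j := fun j => by rw [hq]; positivity
      have hpnn : ∀ j, 0 ≤ pM j := fun j => by rw [hpc j]; positivity
      have hpz : ∀ j ∉ S, pM j = 0 := by
        intro j hj
        rw [hpc j, hz j (by simpa [hS] using hj)]; simp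
      have hqz : ∀ j ∉ S, q j = 0 := by
        intro j hj
        rw [hq]; simp [hc'z j (by simpa [hS] using hj)]
      have hcomp : ∑ j ∈ S, pM j * Real.log (pM j / t j) ≤
          ∑ j ∈ S, q j * Real.log (q j / t j) := by
        have h := hopt q hqM
        rw [klE_eq_sum t hpos pM hpnn S hpz, klE_eq_sum t hpos q hqnn S hqz] at h
        exact_mod_cast h
      rw [hdecompR (fun j => pM j * Real.log (pM j / t j)),
          hdecompR (fun j => q j * Real.log (q j / t j))] at hcomp
      have hrest : ∑ j ∈ (S.erase 0).erase i, q j * Real.log (q j / t j) =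
          ∑ j ∈ (S.erase 0).erase i, pM j * Real.log (pM j / t j) := by
        refine Finset.sum_congr rfl (fun j hj => ?_)
        obtain ⟨hji, hj'⟩ := Finset.mem_erase.1 hj
        obtain ⟨hj0, _⟩ := Finset.mem_erase.1 hj'
        rw [hq, hpc j, hc']
        simp [hj0, hji]
      rw [hrest] at hcomp
      have hkey : pM 0 * Real.log (pM 0 / t 0) + pM i * Real.log (pM i / t i) ≤
          q 0 * Real.log (q 0 / t 0) + q i * Real.log (q i / t i) := by linarith
      -- expand all four terms
      have hp0 : pM 0 = ((a:ℕ):ℝ)/M := by rw [hpc 0]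
      have hpi : pM i = ((b:ℕ):ℝ)/M := by rw [hpc i]
      have hq0 : q 0 = (((a+1:ℕ)):ℝ)/M := by rw [hq, hc']; simp
      have hqi : q i = (((b-1:ℕ)):ℝ)/M := by rw [hq, hc']; simp [hi0]
      rw [hp0, hpi, hq0, hqi] at hkey
      rw [term_expand hM (hpos 0) a, term_expand hM (hpos i) b,
          term_expand hM (hpos 0) (a+1), term_expand hM (hpos i) (b-1)] at hkey
      have hb1 : 1 ≤ b := hi
      have hcastb : ((b-1:ℕ):ℝ) = (b:ℝ) - 1 := by
        push_cast [hb1]; ring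
      have hga : ((a:ℝ)+1) * Real.log ((a:ℝ)+1) - (a:ℝ) * Real.log a = gfun a := rfl
      have hgb : (b:ℝ) * Real.log b - ((b:ℝ)-1) * Real.log ((b:ℝ)-1) = gfun (b-1) := by
        rw [gfun, hcastb]; ring_nf
      -- divide out 1/M and rearrange
      have hMne : (M:ℝ) ≠ 0 := ne_of_gt hM'
      rw [← add_div, ← add_div, div_le_div_iff_of_pos_right hM'] at hkey
      push_cast at hkey
      rw [hcastb] at hkey
      have hineq : Real.log (t 0) + gfun (b-1) - gfun a ≤ Real.log (t i) := by
        rw [← hgb, ← hga]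
        nlinarith [hkey]
      have h1 : (0:ℝ) ≤ Real.log ((b:ℝ)) := by
        have : (1:ℝ) ≤ (b:ℝ) := by exact_mod_cast hb1
        exact Real.log_nonneg this
      have h3 : (0:ℝ) ≤ gfun (b-1) := by
        have hgl := gfun_lb (b-1)
        rw [hcastb] at hgl
        have hbeq : (b:ℝ) - 1 + 1 = (b:ℝ) := by ring
        rw [hbeq] at hgl
        linarith
      have h4 : gfun a ≤ Real.log ((a:ℝ)+1) + 1 := gfun_ub a
      have h5 : Real.log ((a:ℝ)+1) ≤ Real.log (M:ℝ) := by
        have ha0 : (0:ℝ) ≤ (a:ℝ) := Nat.cast_nonneg a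
        apply Real.log_le_log (by linarith)
        have : a + 1 ≤ M := hc0M
        exact_mod_cast this
      have hlogfinal : Real.log (t 0 / (Real.exp 1 * M)) ≤ Real.log (t i) := by
        rw [Real.log_div (ne_of_gt (hpos 0)) (mul_pos (Real.exp_pos 1) hM').ne',
            Real.log_mul (ne_of_gt (Real.exp_pos 1)) hMne, Real.log_exp]
        linarith
      calc t 0 / (Real.exp 1 * M) = Real.exp (Real.log (t 0 / (Real.exp 1 * M))) := by
            rw [Real.exp_log (div_pos (hpos 0) (mul_pos (Real.exp_pos 1) hM'))]
        _ ≤ Real.exp (Real.log (t i)) := Real.exp_le_exp.2 hlogfinal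
        _ = t i := Real.exp_log (hpos i)

/-- for a target distribution with countably infinite support, the
support sizes `k(M)` of any informational-divergence optimal `M`-type
approximations `p M` satisfy `k(M) → ∞` and `k(M)/M → 0` as `M → ∞`. -/
theorem stmt13 (t : ℕ → ℝ) (ht : IsTargetDist t) (hpos : ∀ i, 0 < t i)
    (p : ℕ → ℕ → ℝ)
    (hp : ∀ M, 0 < M → IsMType M (p M) ∧ ∀ q, IsMType M q → klE (p M) t ≤ klE q t) :
    Filter.Tendsto (fun M => Nat.card {i | 0 < p M i}) Filter.atTop Filter.atTop ∧
    Filter.Tendsto (fun M => (Nat.card {i | 0 < p M i} : ℝ) / (M : ℝ))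
      Filter.atTop (nhds 0) := by
  classical
  have hT : IsTargetDist t := ht
  obtain ⟨hnn, hanti', hhs⟩ := ht
  have hanti : Antitone t := antitone_nat_of_succ_le hanti'
  have ht0 : 0 < t 0 := hpos 0
  have htd : Tendsto (fun n => ∑ i ∈ Finset.range n, t i) atTop (nhds 1) := hhs.tendsto_sum_nat
  -- per-M structure of the optimal distribution
  have hstruct : ∀ M : ℕ, 1 ≤ M →
      ∃ S' : Finset ℕ, {i | 0 < p M i} = ↑S' ∧ S'.Nonempty ∧
        (Nat.card {i | 0 < p M i} = S'.card) ∧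
        (∀ i ∈ S', t 0 / (Real.exp 1 * M) ≤ t i) ∧
        (∑ i ∈ S', p M i = 1) ∧
        ∀ ε : ℝ, klE (p M) t ≤ (ε : EReal) →
          - Real.log (∑ i ∈ S', t i) ≤ ε := by
    intro M hM1
    obtain ⟨hMt, hopt⟩ := hp M hM1
    obtain ⟨c, hle, hpc, N, hN0, hz, hcs⟩ := mtype_struct hM1 hMt
    have hM' : (0:ℝ) < M := by exact_mod_cast hM1
    have hpnn : ∀ i, 0 ≤ p M i := fun i => by rw [hpc i]; positivity
    have hpz : ∀ i ∉ Finset.range N, p M i = 0 := by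
      intro i hi
      rw [hpc i, hz i (by simpa using hi)]; simp
    set S' := (Finset.range N).filter (fun i => 0 < p M i) with hS'
    have hset : {i | 0 < p M i} = ↑S' := by
      ext i
      simp only [Set.mem_setOf_eq, hS', Finset.coe_filter, Finset.mem_range, Set.mem_setOf_eq]
      constructor
      · intro h
        refine ⟨?_, h⟩
        by_contra hh
        rw [hpz i (by simpa using hh)] at h
        exact lt_irrefl 0 h
      · exact fun h => h.2
    have hsum1 : ∑ i ∈ Finset.range N, p M i = 1 := by
      have h1 : ∑ i ∈ Finset.range N, p M i = (∑ i ∈ Finset.range N, (c i:ℝ))/M := by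
        rw [Finset.sum_div]; exact Finset.sum_congr rfl (fun i _ => hpc i)
      have h2 : (∑ i ∈ Finset.range N, (c i:ℝ)) = (M:ℝ) := by
        exact_mod_cast congrArg Nat.cast hcs
      rw [h1, h2]; field_simp
    have hsumS' : ∑ i ∈ S', p M i = 1 := by
      rw [hS', Finset.sum_filter_of_ne (fun i hi h => lt_of_le_of_ne (hpnn i) (Ne.symm h)),
        hsum1]
    have hne : S'.Nonempty := by
      by_contra h
      rw [Finset.not_nonempty_iff_eq_empty] at h
      rw [h] at hsumS'
      simpa using hsumS'
    have hcard : Nat.card {i | 0 < p M i} = S'.card := by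
      rw [hset, Nat.card_coe_set_eq, Set.ncard_coe_finset]
    refine ⟨S', hset, hne, hcard, ?_, hsumS', ?_⟩
    · intro i hi
      have hpi : 0 < p M i := (Finset.mem_filter.1 hi).2
      have hci : 0 < c i := by
        rcases Nat.eq_zero_or_pos (c i) with h | h
        · rw [hpc i, h] at hpi; simp at hpi
        · exact h
      exact support_weight t hpos hM1 hopt c hle hpc N hN0 hz hcs hci
    · intro ε hε
      have hkl : klE (p M) t =
          ((∑ i ∈ Finset.range N, p M i * Real.log (p M i / t i) : ℝ) : EReal) :=
        klE_eq_sum t hpos (p M) hpnn _ hpz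
      rw [hkl] at hε
      have hD : ∑ i ∈ Finset.range N, p M i * Real.log (p M i / t i) ≤ ε := by
        exact_mod_cast hε
      have := kl_lb t hpos (p M) hpnn (Finset.range N) hsum1
      rw [← hS'] at this
      linarith
  -- eventually small divergence
  have hsmall : ∀ ε : ℝ, 0 < ε → ∀ᶠ M in atTop, klE (p M) t ≤ (ε : EReal) := by
    intro ε hε
    filter_upwards [achievable t hT hpos hε, eventually_ge_atTop 1] with M hach hM1
    obtain ⟨q, hqM, hqnn, hqz, hqs⟩ := hach
    calc klE (p M) t ≤ klE q t := (hp M hM1).2 q hqM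
      _ = _ := klE_eq_sum t hpos q hqnn _ hqz
      _ ≤ (ε : EReal) := EReal.coe_le_coe_iff.2 hqs
  constructor
  · -- k(M) → ∞
    rw [tendsto_atTop]
    intro b
    set b' := max b 1 with hb'
    have hb1 : 1 ≤ b' := le_max_right _ _
    set Tb := ∑ i ∈ Finset.range b', t i with hTb
    have hTpos : 0 < Tb :=
      Finset.sum_pos (fun i _ => hpos i) ⟨0, Finset.mem_range.2 (by omega)⟩
    have hTlt : Tb < 1 := by
      have h1 : ∑ i ∈ Finset.range (b'+1), t i ≤ 1 :=
        sum_le_hasSum _ (fun i _ => hnn i) hhs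
      rw [Finset.sum_range_succ] at h1
      have := hpos b'
      rw [hTb]
      linarith
    have hδ : 0 < - Real.log Tb := by
      have := Real.log_neg hTpos hTlt
      linarith
    filter_upwards [hsmall (-Real.log Tb / 2) (by linarith), eventually_ge_atTop 1]
      with M hsm hM1
    obtain ⟨S', hset, hne, hcard, hw, hsumS', hlb⟩ := hstruct M hM1
    have hD := hlb _ hsm
    rw [hcard]
    by_contra hcon
    push_neg at hcon
    have hbb : b ≤ b' := le_max_left b 1
    have hcb : S'.card ≤ b' := by omega
    have h2 : ∑ i ∈ S', t i ≤ Tb := by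
      calc ∑ i ∈ S', t i ≤ ∑ i ∈ Finset.range S'.card, t i := sum_anti_le t hnn hanti S'
        _ ≤ Tb := Finset.sum_le_sum_of_subset_of_nonneg
            (Finset.range_subset_range.2 hcb) (fun i _ _ => hnn i)
    have h3 : 0 < ∑ i ∈ S', t i := Finset.sum_pos (fun i _ => hpos i) hne
    have h4 : Real.log (∑ i ∈ S', t i) ≤ Real.log Tb := Real.log_le_log h3 h2
    linarith
  · -- k(M)/M → 0
    rw [Metric.tendsto_atTop]
    intro ε hε
    have he : (0:ℝ) < Real.exp 1 := Real.exp_pos 1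
    set ε' := ε * t 0 / (4 * Real.exp 1) with hε'
    have hε'pos : 0 < ε' := by rw [hε']; positivity
    have hev1 : ∀ᶠ n in atTop, 1 - ε' < ∑ i ∈ Finset.range n, t i :=
      htd.eventually_const_lt (by linarith)
    obtain ⟨n₀, hn₀⟩ := hev1.exists
    have hev2 : ∀ᶠ M : ℕ in atTop, (n₀:ℝ)/(M:ℝ) < ε/4 :=
      (tendsto_const_div_atTop_nhds_zero_nat (n₀:ℝ)).eventually_lt_const (by linarith)
    have hfinal : ∀ᶠ M : ℕ in atTop,
        dist ((Nat.card {i | 0 < p M i} : ℝ) / M) 0 < ε := by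
      filter_upwards [hev2, eventually_ge_atTop 1] with M hMn hM1
      obtain ⟨S', hset, hne, hcard, hw, hsumS', hlb⟩ := hstruct M hM1
      have hM' : (0:ℝ) < M := by exact_mod_cast hM1
      set F := S'.filter (fun i => n₀ ≤ i) with hF
      have hsub : S' ⊆ F ∪ Finset.range n₀ := by
        intro i hi
        by_cases h : n₀ ≤ i
        · exact Finset.mem_union_left _ (Finset.mem_filter.2 ⟨hi, h⟩)
        · exact Finset.mem_union_right _ (Finset.mem_range.2 (by omega))
      have hcardsplit : S'.card ≤ F.card + n₀ := by
        calc S'.card ≤ (F ∪ Finset.range n₀).card := Finset.card_le_card hsub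
          _ ≤ F.card + (Finset.range n₀).card := Finset.card_union_le _ _
          _ = F.card + n₀ := by rw [Finset.card_range]
      have hθ : ∀ i ∈ F, t 0 / (Real.exp 1 * M) ≤ t i :=
        fun i hi => hw i (Finset.mem_filter.1 hi).1
      have hFlb : (F.card : ℝ) * (t 0 / (Real.exp 1 * M)) ≤ ∑ i ∈ F, t i := by
        have h := Finset.card_nsmul_le_sum F t _ hθ
        simpa [nsmul_eq_mul] using h
      have hdisj : Disjoint (Finset.range n₀) F := by
        rw [Finset.disjoint_left]
        intro i hi hiF
        have h1 := (Finset.mem_filter.1 hiF).2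
        have h2 := Finset.mem_range.1 hi
        omega
      have huni : ∑ i ∈ Finset.range n₀, t i + ∑ i ∈ F, t i ≤ 1 := by
        rw [← Finset.sum_union hdisj]
        exact sum_le_hasSum _ (fun i _ => hnn i) hhs
      have hFub : ∑ i ∈ F, t i ≤ ε' := by linarith [hn₀]
      have hFcard : (F.card : ℝ) ≤ ε * M / 4 := by
        have h1 : (F.card:ℝ) * (t 0 / (Real.exp 1 * M)) ≤ ε' := le_trans hFlb hFub
        rw [hε'] at h1
        have h1' : ((F.card:ℝ) * t 0) / (Real.exp 1 * M) ≤ ε * t 0 / (4 * Real.exp 1) := by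
          rw [← mul_div_assoc] at h1
          exact h1
        have h2 : (F.card:ℝ) * t 0 ≤ ε * t 0 / (4 * Real.exp 1) * (Real.exp 1 * M) :=
          (div_le_iff₀ (mul_pos he hM')).1 h1'
        have h3 : ε * t 0 / (4 * Real.exp 1) * (Real.exp 1 * M) = ε * M / 4 * t 0 := by
          field_simp
        rw [h3] at h2
        exact le_of_mul_le_mul_right h2 ht0
      have hn₀M : (n₀:ℝ) ≤ ε * M / 4 := by
        rw [div_lt_iff₀ hM'] at hMn
        nlinarith
      have hcardR : (S'.card : ℝ) ≤ ε * M / 2 := by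
        have hc : (S'.card:ℝ) ≤ (F.card:ℝ) + (n₀:ℝ) := by exact_mod_cast hcardsplit
        linarith
      rw [hcard, Real.dist_eq, sub_zero, abs_of_nonneg (by positivity),
        div_lt_iff₀ hM']
      nlinarith
    obtain ⟨N, hN⟩ := eventually_atTop.1 hfinal
    exact ⟨N, hN⟩
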